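/- Let X be a convex subset of a real normed vector space and let F : X × X → ℝ satisfy (A1) uniform α-strong convexity in the second argument and (A3) uniform β-Lipschitz continuity of ∇₂F in the first argument. Let (x_n) be the value-aggregation sequence: x₁ ∈ X and x_{n+1} ∈ argmin_{x∈X} Σ_{k=1}^n F(x_k, x), write f_n(x) = F(x_n, x), and define S_n = (Σ_{k=1}^{n−1} ‖x_n − x_k‖)/(n−1) for n ≥ 2. Then for all n ≥ 2, f_n(x_n) − inf_{x∈X} f_n(x) ≤ β² S_n² / (2α). -/

import Mathlib

/-- Per-round optimality gap of the Follow-the-Leader iterate.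
Under (A1) uniform `α`-strong convexity in the second argument and (A3) uniform
`β`-Lipschitzness of `∇₂F` in the first argument, the Follow-the-Leader iterates
satisfy `f_n(x_n) − inf_{x ∈ X} f_n(x) ≤ β² S_n² / (2α)` for `n ≥ 2`, where
`f_n = F(x_n, ·)` and `S_n = (Σ_{k=1}^{n−1} ‖x_n − x_k‖)/(n−1)`. -/
theorem stmt_8
    {E : Type*} [NormedAddCommGroup E] [NormedSpace ℝ E]
    (X : Set E) (hX : Convex ℝ X)
    (F : E → E → ℝ) (D2F : E → E → (E →L[ℝ] ℝ))
    (α β : ℝ) (hα : 0 < α) (hβ : 0 ≤ β)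
    (hgrad : ∀ z ∈ X, ∀ y ∈ X, HasFDerivWithinAt (F z) (D2F z y) X y)
    (hA1 : ∀ z ∈ X, ∀ y ∈ X, ∀ x ∈ X,
      F z x ≥ F z y + D2F z y (x - y) + α / 2 * ‖x - y‖ ^ 2)
    (hA3 : ∀ x ∈ X, ∀ y ∈ X, ∀ z ∈ X, ‖D2F x z - D2F y z‖ ≤ β * ‖x - y‖)
    (x : ℕ → E) (hmem : ∀ n, 1 ≤ n → x n ∈ X)
    (hftl : ∀ n, 1 ≤ n → ∀ y ∈ X,
      ∑ k ∈ Finset.Icc 1 n, F (x k) (x (n + 1)) ≤ ∑ k ∈ Finset.Icc 1 n, F (x k) y)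
    (S : ℕ → ℝ)
    (hS : ∀ n, 2 ≤ n →
      S n = (∑ k ∈ Finset.Icc 1 (n - 1), ‖x n - x k‖) / ((n : ℝ) - 1)) :
    ∀ n, 2 ≤ n →
      F (x n) (x n) - sInf (F (x n) '' X) ≤ β ^ 2 * (S n) ^ 2 / (2 * α) := by
  intro n hn
  obtain ⟨M, rfl⟩ : ∃ M, n = M + 1 := ⟨n - 1, by omega⟩
  have hM : 1 ≤ M := by omega
  set a := x (M + 1) with ha
  have haX : a ∈ X := hmem _ (by omega)
  have hMpos : (0 : ℝ) < (M : ℝ) := by exact_mod_cast hM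
  -- S value
  have hSval : S (M + 1) = (∑ k ∈ Finset.Icc 1 M, ‖a - x k‖) / (M : ℝ) := by
    have := hS (M + 1) hn
    simpa [ha] using this
  have hSnn : 0 ≤ S (M + 1) := by
    rw [hSval]
    positivity
  set s := S (M + 1) with hs'
  -- optimality of a for the aggregated objective
  have hmin : IsMinOn (fun v => ∑ k ∈ Finset.Icc 1 M, F (x k) v) X a := by
    intro y hy
    exact hftl M hM y hy
  have hG : HasFDerivWithinAt (fun v => ∑ k ∈ Finset.Icc 1 M, F (x k) v)
      (∑ k ∈ Finset.Icc 1 M, D2F (x k) a) X a :=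
    HasFDerivWithinAt.fun_sum fun k hk =>
      hgrad (x k) (hmem k (Finset.mem_Icc.mp hk).1) a haX
  -- key pointwise bound
  have hkey : ∀ y ∈ X, F a a - F a y ≤ β ^ 2 * s ^ 2 / (2 * α) := by
    intro y hy
    set d : ℝ := ‖y - a‖ with hd
    have hdnn : 0 ≤ d := norm_nonneg _
    -- first-order optimality
    have hcone : y - a ∈ posTangentConeAt X a :=
      sub_mem_posTangentConeAt_of_segment_subset (hX.segment_subset haX hy)
    have hfo : 0 ≤ (∑ k ∈ Finset.Icc 1 M, D2F (x k) a) (y - a) :=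
      hmin.localize.hasFDerivWithinAt_nonneg hG hcone
    rw [ContinuousLinearMap.sum_apply] at hfo
    -- gradient comparison via A3
    have hcmp : ∀ k ∈ Finset.Icc 1 M,
        -(β * ‖a - x k‖ * d) ≤ D2F a a (y - a) - D2F (x k) a (y - a) := by
      intro k hk
      have hxk : x k ∈ X := hmem k (Finset.mem_Icc.mp hk).1
      have h1 : ‖D2F a a - D2F (x k) a‖ ≤ β * ‖a - x k‖ := hA3 a haX (x k) hxk a haX
      have h2 : ‖(D2F a a - D2F (x k) a) (y - a)‖ ≤ ‖D2F a a - D2F (x k) a‖ * d :=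
        (D2F a a - D2F (x k) a).le_opNorm _
      have h3 : ‖D2F a a - D2F (x k) a‖ * d ≤ β * ‖a - x k‖ * d :=
        mul_le_mul_of_nonneg_right h1 hdnn
      have h4 : |D2F a a (y - a) - D2F (x k) a (y - a)| ≤ β * ‖a - x k‖ * d := by
        have : (D2F a a - D2F (x k) a) (y - a)
            = D2F a a (y - a) - D2F (x k) a (y - a) := by simp
        rw [this] at h2
        calc |D2F a a (y - a) - D2F (x k) a (y - a)|
            = ‖D2F a a (y - a) - D2F (x k) a (y - a)‖ := rfl
          _ ≤ ‖D2F a a - D2F (x k) a‖ * d := h2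
          _ ≤ β * ‖a - x k‖ * d := h3
      linarith [abs_le.mp h4]
    have hsum := Finset.sum_le_sum hcmp
    have hcard : (Finset.Icc 1 M).card = M := by
      rw [Nat.card_Icc]; omega
    have hsum1 : ∑ k ∈ Finset.Icc 1 M, (D2F a a (y - a) - D2F (x k) a (y - a))
        = (M : ℝ) * D2F a a (y - a) - ∑ k ∈ Finset.Icc 1 M, D2F (x k) a (y - a) := by
      rw [Finset.sum_sub_distrib, Finset.sum_const, hcard, nsmul_eq_mul]
    have hsum2 : ∑ k ∈ Finset.Icc 1 M, -(β * ‖a - x k‖ * d)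
        = -(β * (∑ k ∈ Finset.Icc 1 M, ‖a - x k‖) * d) := by
      rw [Finset.sum_neg_distrib, Finset.mul_sum, Finset.sum_mul]
    have hnormsum : ∑ k ∈ Finset.Icc 1 M, ‖a - x k‖ = (M : ℝ) * s := by
      rw [hSval]
      field_simp
    rw [hsum1, hsum2, hnormsum] at hsum
    -- so  -(β * M * s * d) ≤ M * D2F a a (y-a) - (nonneg), hence D2F a a (y-a) ≥ -β s d
    have hgb : -(β * s * d) ≤ D2F a a (y - a) := by
      have h5 : -(β * ((M:ℝ) * s) * d) ≤ (M : ℝ) * D2F a a (y - a) := by linarith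
      have h6 : (M : ℝ) * (-(β * s * d)) ≤ (M : ℝ) * D2F a a (y - a) := by
        nlinarith
      exact le_of_mul_le_mul_left h6 hMpos
    -- strong convexity A1
    have hsc := hA1 a haX a haX y hy
    have : F a a - F a y ≤ β * s * d - α / 2 * d ^ 2 := by
      rw [← hd] at hsc
      linarith
    have hb : β * s * d - α / 2 * d ^ 2 ≤ β ^ 2 * s ^ 2 / (2 * α) := by
      rw [le_div_iff₀ (by positivity : (0:ℝ) < 2 * α)]
      nlinarith [sq_nonneg (β * s - α * d)]
    linarith
  -- conclude via sInf
  have hne : (F a '' X).Nonempty := ⟨F a a, a, haX, rfl⟩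
  have hlb : F a a - β ^ 2 * s ^ 2 / (2 * α) ≤ sInf (F a '' X) := by
    apply le_csInf hne
    rintro b ⟨y, hy, rfl⟩
    linarith [hkey y hy]
  linarith
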